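/- In the traffic-intersection ARS, the set of fair derivations—those in which every car arriving at the intersection eventually crosses—is not a closed set of derivations, and hence is not the extension of any intensional strategy. -/

import Mathlib

/-- A derivation over objects `O` and labels `L`: a partial function on ℕ whose
domain is an initial segment, with composable consecutive steps. -/
structure Deriv (O L : Type) where
  step : ℕ → Option (O × L × O)
  initial : ∀ i, step (i + 1) ≠ none → step i ≠ none
  comp : ∀ i s t, step i = some s → step (i + 1) = some t → t.1 = s.2.2

namespace Deriv
/-- Non-empty derivation. -/
def NE {O L : Type} (π : Deriv O L) : Prop := π.step 0 ≠ none
/-- Finite derivation. -/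
def Finite {O L : Type} (π : Deriv O L) : Prop := ∃ n, π.step n = none
/-- Derivation over the set of steps `Γ` of an ARS. -/
def Over {O L : Type} (Γ : Set (O × L × O)) (π : Deriv O L) : Prop :=
  ∀ i s, π.step i = some s → s ∈ Γ
end Deriv

/-- `π₀` is a prefix of `π`. -/
def DPrefix {O L : Type} (π₀ π : Deriv O L) : Prop :=
  ∀ i s, π₀.step i = some s → π.step i = some s

/-- History (trace) of the first `j` steps of a derivation. -/
def histD {O L : Type} (π : Deriv O L) (j : ℕ) : List (O × L) :=
  (List.range j).filterMap fun i => (π.step i).map fun s => (s.1, s.2.1)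

/-- Extension of an intensional strategy with memory. -/
def ExtOf {O L : Type} (lam : List (O × L) → O → Set (O × L × O)) : Set (Deriv O L) :=
  {π | π.NE ∧ ∀ j s, π.step j = some s → s ∈ lam (histD π j) s.1}

/-- Extension of a memoryless intensional strategy. -/
def MExtOf {O L : Type} (lam : O → Set (O × L × O)) : Set (Deriv O L) :=
  {π | π.NE ∧ ∀ j s, π.step j = some s → s ∈ lam s.1}

/-- Well-formedness of an intensional strategy with memory over the ARS `Γ`:
every chosen step has the current object as source and belongs to `Γ`. -/
def WfStrat {O L : Type} (Γ : Set (O × L × O))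
    (lam : List (O × L) → O → Set (O × L × O)) : Prop :=
  ∀ α a s, s ∈ lam α a → s.1 = a ∧ s ∈ Γ

/-- Well-formedness of a memoryless intensional strategy. -/
def MWfStrat {O L : Type} (Γ : Set (O × L × O)) (lam : O → Set (O × L × O)) : Prop :=
  ∀ a s, s ∈ lam a → s.1 = a ∧ s ∈ Γ

/-- `Γ` is a functional relation. -/
def FunctionalARS {O L : Type} (Γ : Set (O × L × O)) : Prop :=
  ∀ a φ b₁ b₂, (a, φ, b₁) ∈ Γ → (a, φ, b₂) ∈ Γ → b₁ = b₂

/-- `π` is a limit point of `ζ`: every finite non-empty prefix of `π` is a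
prefix of some member of `ζ`. -/
def LimPt {O L : Type} (ζ : Set (Deriv O L)) (π : Deriv O L) : Prop :=
  π.NE ∧ ∀ π₀ : Deriv O L, π₀.Finite → π₀.NE → DPrefix π₀ π → ∃ π' ∈ ζ, DPrefix π₀ π'

/-- `ζ` is closed: it contains all its limit points. -/
def ClosedStrat {O L : Type} (ζ : Set (Deriv O L)) : Prop :=
  ∀ π, LimPt ζ π → π ∈ ζ

/-- `ζ` is closed under non-empty prefixes. -/
def PrefClosed {O L : Type} (ζ : Set (Deriv O L)) : Prop :=
  ∀ π ∈ ζ, ∀ π₀ : Deriv O L, π₀.NE → DPrefix π₀ π → π₀ ∈ ζ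

/-- Objects of the traffic ARS: (queue 1, light 1, queue 2, light 2). -/
abbrev TObj : Type := ℕ × Bool × ℕ × Bool

inductive TLab : Type | car1 | car2 | sig1 | sig2 | cross1 | cross2

/-- Steps of the traffic-intersection ARS. -/
def TGam : Set (TObj × TLab × TObj) :=
  {t | ∃ q1 l1 q2 l2,
    t = ((q1, l1, q2, l2), TLab.car1, (q1 + 1, l1, q2, l2)) ∨
    t = ((q1, l1, q2, l2), TLab.car2, (q1, l1, q2 + 1, l2)) ∨
    t = ((q1, l1, q2, l2), TLab.sig1, (q1, !l1, q2, l2)) ∨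
    t = ((q1, l1, q2, l2), TLab.sig2, (q1, l1, q2, !l2)) ∨
    t = ((q1 + 1, true, q2, l2), TLab.cross1, (q1, true, q2, l2)) ∨
    t = ((q1, l1, q2 + 1, true), TLab.cross2, (q1, l1, q2, true))}

/-- Both signals are green. -/
def BothGreen (o : TObj) : Prop := o.2.1 = true ∧ o.2.2.2 = true

/-- A derivation is fair if every car arriving at the intersection eventually
crosses: whenever queue j is non-empty at some position, a later step has label
crossⱼ. -/
def Fair (π : Deriv TObj TLab) : Prop :=
  (∀ i s, π.step i = some s → 0 < s.1.1 →
    ∃ k, i ≤ k ∧ ∃ t, π.step k = some t ∧ t.2.1 = TLab.cross1) ∧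
  (∀ i s, π.step i = some s → 0 < s.1.2.2.1 →
    ∃ k, i ≤ k ∧ ∃ t, π.step k = some t ∧ t.2.1 = TLab.cross2)

/-- The set of fair derivations of the traffic ARS. -/
def zetaFair : Set (Deriv TObj TLab) :=
  {π | π.NE ∧ π.Over TGam ∧ Fair π}


/-! ### Auxiliary material -/

section Aux
variable {O L : Type}

/-- Domain of a derivation is downward closed. -/
lemma Deriv.dom_mono (π : Deriv O L) : ∀ k i, π.step (i + k) ≠ none → π.step i ≠ none := by
  intro k
  induction k with
  | zero => intro i h; exact h
  | succ n ih =>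
      intro i h
      exact ih i (π.initial (i + n) (by rwa [show i + n + 1 = i + (n+1) by omega]))

lemma Deriv.dom_le (π : Deriv O L) {i j : ℕ} (h : i ≤ j) (hj : π.step j ≠ none) :
    π.step i ≠ none := by
  have := π.dom_mono (j - i) i
  rw [show i + (j - i) = j by omega] at this
  exact this hj

/-- Truncation of a derivation to its first `n` steps. -/
def truncD (π : Deriv O L) (n : ℕ) : Deriv O L where
  step i := if i < n then π.step i else none
  initial := by
    intro i h
    by_cases h1 : i + 1 < n
    · simp only [if_pos h1] at h
      simp only [if_pos (by omega : i < n)]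
      exact π.initial i h
    · simp [if_neg h1] at h
  comp := by
    intro i s t hs ht
    by_cases h1 : i + 1 < n
    · simp only [if_pos h1] at ht
      simp only [if_pos (by omega : i < n)] at hs
      exact π.comp i s t hs ht
    · simp [if_neg h1] at ht

lemma truncD_step (π : Deriv O L) (n i : ℕ) :
    (truncD π n).step i = if i < n then π.step i else none := rfl

lemma filterMap_congr' {α β : Type*} (f g : α → Option β) :
    ∀ (l : List α), (∀ a ∈ l, f a = g a) → l.filterMap f = l.filterMap g := by
  intro l
  induction l with
  | nil => intro _; rfl
  | cons a l ih =>
      intro h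
      simp only [List.filterMap_cons, h a (by simp), ih (fun b hb => h b (by simp [hb]))]

/-- Extensions of intensional strategies are closed. -/
lemma extOf_closed (lam : List (O × L) → O → Set (O × L × O)) :
    ClosedStrat (ExtOf lam) := by
  rintro π ⟨hne, hlim⟩
  refine ⟨hne, ?_⟩
  intro j s hs
  have hdom : ∀ i, i ≤ j → π.step i ≠ none := fun i hi =>
    π.dom_le hi (by simp [hs])
  obtain ⟨π', hπ', hpre⟩ := hlim (truncD π (j+1))
    ⟨j+1, by rw [truncD_step, if_neg (by omega)]⟩
    (by
      show (truncD π (j+1)).step 0 ≠ none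
      rw [truncD_step, if_pos (by omega)]
      exact hdom 0 (by omega))
    (by
      intro i t ht
      rw [truncD_step] at ht
      split at ht
      · exact ht
      · exact absurd ht (by simp))
  have hj : π'.step j = some s :=
    hpre j s (by rw [truncD_step, if_pos (by omega)]; exact hs)
  have hist : histD π' j = histD π j := by
    unfold histD
    apply filterMap_congr'
    intro i hi
    rw [List.mem_range] at hi
    obtain ⟨t, ht⟩ := Option.ne_none_iff_exists'.mp (hdom i (by omega))
    have : π'.step i = some t :=
      hpre i t (by rw [truncD_step, if_pos (by omega)]; exact ht)
    rw [ht, this]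
  have := hπ'.2 j s hj
  rwa [hist] at this

end Aux

/-- Step function of the unfair derivation alternating cross₂ and car₂. -/
def bstep (i : ℕ) : Option (TObj × TLab × TObj) :=
  some (if i % 2 = 0 then ((1, false, 1, true), TLab.cross2, (1, false, 0, true))
    else ((1, false, 0, true), TLab.car2, (1, false, 1, true)))

/-- The unfair infinite derivation alternating cross₂ and car₂ from `[1,0,1,1]`. -/
def piBad : Deriv TObj TLab where
  step := bstep
  initial := by intro i h; simp [bstep]
  comp := by
    intro i s t hs ht
    simp only [bstep, Option.some.injEq] at hs ht
    by_cases h : i % 2 = 0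
    · rw [if_pos h] at hs; rw [if_neg (by omega)] at ht
      subst hs; subst ht; rfl
    · rw [if_neg h] at hs; rw [if_pos (by omega)] at ht
      subst hs; subst ht; rfl

/-- Step function of the fair completion after `2*n` steps of `bstep`. -/
def gstep (n i : ℕ) : Option (TObj × TLab × TObj) :=
  if i < 2*n then bstep i
  else if i = 2*n then some ((1, false, 1, true), TLab.sig1, (1, true, 1, true))
  else if i = 2*n + 1 then some ((1, true, 1, true), TLab.cross1, (0, true, 1, true))
  else if i = 2*n + 2 then some ((0, true, 1, true), TLab.cross2, (0, true, 0, true))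
  else none

lemma gstep_initial (n : ℕ) : ∀ i, gstep n (i+1) ≠ none → gstep n i ≠ none := by
  intro i h
  unfold gstep at h ⊢
  rcases Nat.lt_or_ge i (2*n) with h1 | h1
  · rw [if_pos h1]; simp [bstep]
  · rcases Nat.lt_or_ge i (2*n + 3) with h2 | h2
    · have : i = 2*n ∨ i = 2*n+1 ∨ i = 2*n+2 := by omega
      rcases this with rfl | rfl | rfl
      · rw [if_neg (by omega), if_pos rfl]; simp
      · rw [if_neg (by omega), if_neg (by omega), if_pos rfl]; simp
      · rw [if_neg (by omega), if_neg (by omega), if_neg (by omega), if_pos rfl]; simp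
    · exfalso; apply h
      rw [if_neg (by omega), if_neg (by omega), if_neg (by omega), if_neg (by omega)]

lemma gstep_comp (n : ℕ) : ∀ i s t, gstep n i = some s → gstep n (i+1) = some t → t.1 = s.2.2 := by
  intro i s t hs ht
  unfold gstep at hs ht
  rcases Nat.lt_or_ge (i+1) (2*n) with h1 | h1
  · rw [if_pos h1] at ht; rw [if_pos (by omega)] at hs
    exact piBad.comp i s t hs ht
  · by_cases h2 : i + 1 = 2*n
    · rw [if_pos (by omega)] at hs
      rw [if_neg (by omega), if_pos h2] at ht
      have hio : ¬ i % 2 = 0 := by omega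
      simp only [bstep, if_neg hio, Option.some.injEq] at hs
      rw [Option.some.injEq] at ht
      subst hs; subst ht; rfl
    · have hge : i ≥ 2*n := by omega
      rcases Nat.lt_or_ge i (2*n+3) with h3 | h3
      · have : i = 2*n ∨ i = 2*n+1 ∨ i = 2*n+2 := by omega
        rcases this with rfl | rfl | rfl
        · rw [if_neg (by omega), if_pos rfl, Option.some.injEq] at hs
          rw [if_neg (by omega), if_neg (by omega), if_pos rfl, Option.some.injEq] at ht
          subst hs; subst ht; rfl
        · rw [if_neg (by omega), if_neg (by omega), if_pos rfl, Option.some.injEq] at hs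
          rw [if_neg (by omega), if_neg (by omega), if_neg (by omega), if_pos rfl,
            Option.some.injEq] at ht
          subst hs; subst ht; rfl
        · exfalso
          rw [if_neg (by omega), if_neg (by omega), if_neg (by omega), if_neg (by omega)] at ht
          exact Option.some_ne_none _ ht.symm
      · exfalso
        rw [if_neg (by omega), if_neg (by omega), if_neg (by omega), if_neg (by omega)] at hs
        exact Option.some_ne_none _ hs.symm

/-- A fair completion: follow `piBad` for `2*n` steps, then turn signal 1, let
car 1 cross, and let car 2 cross. -/
def piGood (n : ℕ) : Deriv TObj TLab :=
  ⟨gstep n, gstep_initial n, gstep_comp n⟩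

lemma piGood_mem (n : ℕ) : piGood n ∈ zetaFair := by
  have hstep : ∀ i, (piGood n).step i = gstep n i := fun _ => rfl
  refine ⟨?_, ?_, ?_, ?_⟩
  · -- NE
    show (piGood n).step 0 ≠ none
    rw [hstep]; unfold gstep
    rcases Nat.eq_zero_or_pos n with rfl | hn
    · simp
    · rw [if_pos (by omega)]; simp [bstep]
  · -- Over TGam
    intro i s hs
    rw [hstep] at hs; unfold gstep at hs
    split at hs
    · simp only [bstep, Option.some.injEq] at hs
      split at hs <;> subst hs
      · exact ⟨1, false, 0, true, by simp⟩
      · exact ⟨1, false, 0, true, by simp⟩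
    · split at hs
      · rw [Option.some.injEq] at hs; subst hs
        exact ⟨1, false, 1, true, by simp⟩
      · split at hs
        · rw [Option.some.injEq] at hs; subst hs
          exact ⟨0, true, 1, true, by simp⟩
        · split at hs
          · rw [Option.some.injEq] at hs; subst hs
            exact ⟨0, true, 0, true, by simp⟩
          · exact absurd hs (by simp)
  · -- fairness for cross1
    intro i s hs hq
    refine ⟨2*n+1, ?_, ((1, true, 1, true), TLab.cross1, (0, true, 1, true)), ?_, rfl⟩
    · by_contra hcon
      rw [hstep] at hs; unfold gstep at hs
      rw [if_neg (by omega), if_neg (by omega), if_neg (by omega)] at hs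
      split at hs
      · rw [Option.some.injEq] at hs; subst hs; simp at hq
      · exact Option.some_ne_none _ hs.symm
    · rw [hstep]; unfold gstep
      rw [if_neg (by omega), if_neg (by omega), if_pos rfl]
  · -- fairness for cross2
    intro i s hs hq
    rw [hstep] at hs; unfold gstep at hs
    split at hs
    · rename_i hlt
      simp only [bstep, Option.some.injEq] at hs
      split at hs
      · subst hs
        refine ⟨i, le_refl i, ((1, false, 1, true), TLab.cross2, (1, false, 0, true)), ?_, rfl⟩
        rw [hstep]; unfold gstep
        rw [if_pos hlt]
        simp [bstep, *]
      · subst hs; simp at hq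
    · refine ⟨2*n+2, ?_, ((0, true, 1, true), TLab.cross2, (0, true, 0, true)), ?_, rfl⟩
      · split at hs
        · omega
        · split at hs
          · omega
          · split at hs
            · omega
            · exact absurd hs (by simp)
      · rw [hstep]; unfold gstep
        rw [if_neg (by omega), if_neg (by omega), if_neg (by omega), if_pos rfl]

lemma piBad_limpt : LimPt zetaFair piBad := by
  constructor
  · show piBad.step 0 ≠ none
    simp [piBad, bstep]
  · intro π₀ hfin hne hpre
    obtain ⟨n, hn⟩ := hfin
    refine ⟨piGood n, piGood_mem n, ?_⟩
    intro i s hs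
    have hi : i < n := by
      by_contra hcon
      exact absurd hn (π₀.dom_le (by omega : n ≤ i) (by simp [hs]))
    have hbi : piBad.step i = some s := hpre i s hs
    show gstep n i = some s
    unfold gstep
    rw [if_pos (by omega)]
    exact hbi

lemma piBad_not_fair : piBad ∉ zetaFair := by
  rintro ⟨-, -, h1, -⟩
  obtain ⟨k, -, t, ht, hlab⟩ := h1 0 ((1, false, 1, true), TLab.cross2, (1, false, 0, true))
    (by simp [piBad, bstep]) (by norm_num)
  simp only [piBad, bstep, Option.some.injEq] at ht
  split at ht <;> subst ht <;> simp at hlab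

lemma zetaFair_not_closed : ¬ ClosedStrat zetaFair :=
  fun h => piBad_not_fair (h piBad piBad_limpt)

/-- the set of fair derivations of the traffic ARS is not closed,
and hence is not the extension of any intensional strategy. -/
theorem fair_not_closed_not_extension :
    ¬ ClosedStrat zetaFair ∧ ¬ ∃ lam, WfStrat TGam lam ∧ ExtOf lam = zetaFair := by
  refine ⟨zetaFair_not_closed, ?_⟩
  rintro ⟨lam, -, hext⟩
  exact zetaFair_not_closed (hext ▸ extOf_closed lam)
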